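/- Let a, b, c be distinct nonzero reals and let B₃ denote the coefficient of X³ in the Taylor expansion at X = 0 of √((X-a)(X-b)(X-c)(X-ν)). Then B₃ = 0 if and only if (ν(-ab+ac+bc) - abc)(ν(ab+ac-bc) - abc)(ν(ab-ac+bc) - abc) = 0 (up to a nonzero constant factor); in particular, when the respective denominators are nonzero, the solutions are ν = abc/(-ab+bc+ac), ν = abc/(ab-bc+ac), and ν = abc/(ab+bc-ac). -/

import Mathlib

/-- Cayley condition for 4-periodic trajectories: with `B₀,…,B₃` the Taylor
coefficients at `X = 0` of `√((X-a)(X-b)(X-c)(X-ν))` (characterized by the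
coefficient equations below, `B₀ ≠ 0`), `B₃ = 0` holds iff
`(ν(-ab+ac+bc)-abc)(ν(ab+ac-bc)-abc)(ν(ab-ac+bc)-abc) = 0`; when the
respective denominators are nonzero the solutions are
`ν = abc/(-ab+bc+ac)`, `ν = abc/(ab-bc+ac)`, `ν = abc/(ab+bc-ac)`. -/
theorem stmt_16 (a b c ν B0 B1 B2 B3 : ℝ)
    (ha : a ≠ 0) (hb : b ≠ 0) (hc : c ≠ 0)
    (hab : a ≠ b) (hac : a ≠ c) (hbc : b ≠ c)
    (hB0 : B0 ≠ 0)
    (h0 : B0^2 = a * b * c * ν)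
    (h1 : 2 * B0 * B1 = -(a * b * c + a * b * ν + a * c * ν + b * c * ν))
    (h2 : 2 * B0 * B2 + B1^2 = a * b + a * c + b * c + (a + b + c) * ν)
    (h3 : 2 * B0 * B3 + 2 * B1 * B2 = -(a + b + c + ν)) :
    (B3 = 0 ↔
      (ν * (-(a * b) + a * c + b * c) - a * b * c)
        * (ν * (a * b + a * c - b * c) - a * b * c)
        * (ν * (a * b - a * c + b * c) - a * b * c) = 0) ∧
    (-(a * b) + b * c + a * c ≠ 0 → a * b - b * c + a * c ≠ 0 →
      a * b + b * c - a * c ≠ 0 →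
      (B3 = 0 ↔ ν = a * b * c / (-(a * b) + b * c + a * c)
        ∨ ν = a * b * c / (a * b - b * c + a * c)
        ∨ ν = a * b * c / (a * b + b * c - a * c))) := by
  set S : ℝ := -(a * b * c + a * b * ν + a * c * ν + b * c * ν) with hS
  set P : ℝ := a * b + a * c + b * c + (a + b + c) * ν with hP
  set Q : ℝ := a + b + c + ν with hQ
  have key : 16 * B0^5 * B3 =
      (ν * (-(a * b) + a * c + b * c) - a * b * c)
        * (ν * (a * b + a * c - b * c) - a * b * c)
        * (ν * (a * b - a * c + b * c) - a * b * c) := by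
    linear_combination (-4 * P * S - 8 * Q * (B0^2 + a * b * c * ν)) * h0
      + (-4 * B0^2 * P + ((2 * B0 * B1)^2 + (2 * B0 * B1) * S + S^2)) * h1
      + (-8 * B0^3 * B1) * h2 + (8 * B0^4) * h3
  have hB5 : (16 : ℝ) * B0^5 ≠ 0 := by positivity
  have hiff : B3 = 0 ↔
      (ν * (-(a * b) + a * c + b * c) - a * b * c)
        * (ν * (a * b + a * c - b * c) - a * b * c)
        * (ν * (a * b - a * c + b * c) - a * b * c) = 0 := by
    constructor
    · intro h; rw [← key, h, mul_zero]
    · intro h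
      have : 16 * B0^5 * B3 = 0 := by rw [key, h]
      exact (mul_eq_zero.mp this).resolve_left hB5
  refine ⟨hiff, fun d1 d2 d3 => ?_⟩
  rw [hiff, mul_eq_zero, mul_eq_zero]
  constructor
  · rintro ((h | h) | h)
    · left; rw [eq_div_iff d1]; linear_combination h
    · right; left; rw [eq_div_iff d2]; linear_combination h
    · right; right; rw [eq_div_iff d3]; linear_combination h
  · rintro (h | h | h)
    · left; left; rw [eq_div_iff d1] at h; linear_combination h
    · left; right; rw [eq_div_iff d2] at h; linear_combination h
    · right; rw [eq_div_iff d3] at h; linear_combination h
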